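/- Tangent portfolio formula: the maximizer of the Sharpe ratio w ↦ (wᵀμ)/√(wᵀΣw) over w ∈ ℝ^L subject to wᵀ1 = 1, when Σ is positive definite and 1ᵀΣ⁻¹μ > 0, is w* = Σ⁻¹μ / (1ᵀΣ⁻¹μ). -/

import Mathlib

open Matrix

/-- The tangent portfolio `w* = Σ⁻¹μ / (1ᵀΣ⁻¹μ)` is feasible and maximizes the
Sharpe ratio `wᵀμ / √(wᵀΣw)` over the budget constraint `wᵀ1 = 1`, when `Σ` is
positive definite and `1ᵀΣ⁻¹μ > 0`. -/
theorem tangent_portfolio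
    {L : ℕ} (μvec : Fin L → ℝ) (Sig : Matrix (Fin L) (Fin L) ℝ)
    (hSig : Sig.PosDef)
    (ones : Fin L → ℝ) (hones : ones = fun _ => 1)
    (hpos : 0 < ones ⬝ᵥ Sig⁻¹.mulVec μvec)
    (wstar : Fin L → ℝ)
    (hwstar : wstar = (ones ⬝ᵥ Sig⁻¹.mulVec μvec)⁻¹ • Sig⁻¹.mulVec μvec) :
    wstar ⬝ᵥ ones = 1 ∧
      ∀ w : Fin L → ℝ, w ⬝ᵥ ones = 1 →
        (w ⬝ᵥ μvec) / Real.sqrt (w ⬝ᵥ Sig.mulVec w)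
          ≤ (wstar ⬝ᵥ μvec) / Real.sqrt (wstar ⬝ᵥ Sig.mulVec wstar) := by
  set v : Fin L → ℝ := Sig⁻¹.mulVec μvec with hv
  set c : ℝ := ones ⬝ᵥ v with hc
  have hcpos : 0 < c := hpos
  have hSv : Sig.mulVec v = μvec := by
    rw [hv, Matrix.mulVec_mulVec, Matrix.mul_nonsing_inv _
      (isUnit_iff_ne_zero.mpr hSig.det_pos.ne'), Matrix.one_mulVec]
  have hvne : v ≠ 0 := by
    intro h
    have : c = 0 := by rw [hc, h, dotProduct_zero]
    exact hcpos.ne' this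
  set A : ℝ := μvec ⬝ᵥ v with hA
  have hApos : 0 < A := by
    have := hSig.dotProduct_mulVec_pos hvne
    simpa [hSv, dotProduct_comm] using this
  have hT : Sigᵀ = Sig := by
    ext i j
    have := congrFun (congrFun hSig.isHermitian.eq i) j
    simpa using this
  have hsym : ∀ x y : Fin L → ℝ, x ⬝ᵥ Sig.mulVec y = y ⬝ᵥ Sig.mulVec x := by
    intro x y
    rw [Matrix.dotProduct_mulVec, ← Matrix.mulVec_transpose, hT, dotProduct_comm]
  have hfeas : wstar ⬝ᵥ ones = 1 := by
    rw [hwstar, smul_dotProduct, dotProduct_comm, ← hc, smul_eq_mul,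
      inv_mul_cancel₀ hcpos.ne']
  refine ⟨hfeas, ?_⟩
  have hnum : wstar ⬝ᵥ μvec = c⁻¹ * A := by
    rw [hwstar, smul_dotProduct, smul_eq_mul, dotProduct_comm]
  have hden : wstar ⬝ᵥ Sig.mulVec wstar = c⁻¹ * c⁻¹ * A := by
    rw [hwstar, Matrix.mulVec_smul, smul_dotProduct, dotProduct_smul, hSv,
      smul_eq_mul, smul_eq_mul, dotProduct_comm v μvec, ← hA]
    ring
  have hRHS : (wstar ⬝ᵥ μvec) / Real.sqrt (wstar ⬝ᵥ Sig.mulVec wstar)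
      = Real.sqrt A := by
    rw [hnum, hden]
    have hs : Real.sqrt (c⁻¹ * c⁻¹ * A) = c⁻¹ * Real.sqrt A := by
      rw [Real.sqrt_mul (by positivity), Real.sqrt_mul_self (by positivity)]
    rw [hs, mul_div_mul_left _ _ (by positivity : (c:ℝ)⁻¹ ≠ 0), Real.div_sqrt]
  rw [hRHS]
  intro w hw
  by_cases hb : w ⬝ᵥ μvec ≤ 0
  · exact le_trans (div_nonpos_of_nonpos_of_nonneg hb (Real.sqrt_nonneg _))
      (Real.sqrt_nonneg _)
  push_neg at hb
  have hwne : w ≠ 0 := by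
    intro h; rw [h, zero_dotProduct] at hb; exact lt_irrefl 0 hb
  have hapos : 0 < w ⬝ᵥ Sig.mulVec w := hSig.dotProduct_mulVec_pos hwne
  set a : ℝ := w ⬝ᵥ Sig.mulVec w with ha
  set b : ℝ := w ⬝ᵥ μvec with hbdef
  have hcs : b ^ 2 ≤ a * A := by
    have hge : 0 ≤ (A • w - b • v) ⬝ᵥ Sig.mulVec (A • w - b • v) := by
      rcases eq_or_ne (A • w - b • v) 0 with h | h
      · rw [h]; simp
      · exact (hSig.dotProduct_mulVec_pos h).le
    have hexp : (A • w - b • v) ⬝ᵥ Sig.mulVec (A • w - b • v)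
        = A * (a * A - b ^ 2) := by
      simp only [Matrix.mulVec_sub, Matrix.mulVec_smul, sub_dotProduct,
        dotProduct_sub, smul_dotProduct, dotProduct_smul, smul_eq_mul, hSv]
      rw [hsym v w, hSv, ha, hbdef, hA, dotProduct_comm μvec v]
      ring
    nlinarith [hge, hexp, hApos]
  rw [div_le_iff₀ (Real.sqrt_pos.mpr hapos)]
  calc b = Real.sqrt (b ^ 2) := (Real.sqrt_sq hb.le).symm
    _ ≤ Real.sqrt (a * A) := Real.sqrt_le_sqrt hcs
    _ = Real.sqrt A * Real.sqrt a := by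
        rw [Real.sqrt_mul hapos.le, mul_comm]
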